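/- Every function of Class III on an open set ω ⊆ ℍ with ω ∩ ℝ = ∅ is of Class II on ω. -/

import Mathlib

open Quaternion

noncomputable section

/-- The quaternionic imaginary units. -/
def qI : ℍ[ℝ] := ⟨0, 1, 0, 0⟩
def qJ : ℍ[ℝ] := ⟨0, 0, 1, 0⟩
def qK : ℍ[ℝ] := ⟨0, 0, 0, 1⟩

/-- `ι(p) = Im p / |Im p|`. -/
def iota (p : ℍ[ℝ]) : ℍ[ℝ] := (‖p.im‖)⁻¹ • p.im

/-- The left Fueter operator `∂f/∂_l p̄`. -/
def fueterL (f : ℍ[ℝ] → ℍ[ℝ]) (p : ℍ[ℝ]) : ℍ[ℝ] :=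
  fderiv ℝ f p 1 + qI * fderiv ℝ f p qI + qJ * fderiv ℝ f p qJ + qK * fderiv ℝ f p qK

/-- The right Fueter operator `∂f/∂_r p̄`. -/
def fueterR (f : ℍ[ℝ] → ℍ[ℝ]) (p : ℍ[ℝ]) : ℍ[ℝ] :=
  fderiv ℝ f p 1 + fderiv ℝ f p qI * qI + fderiv ℝ f p qJ * qJ + fderiv ℝ f p qK * qK

/-- Spherical parametrization of the imaginary unit sphere. -/
def sph (α β : ℝ) : ℍ[ℝ] :=
  ⟨0, Real.cos α * Real.sin β, Real.sin α * Real.sin β, Real.cos β⟩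

/-- `∂ι/∂α`. -/
def sphA (α β : ℝ) : ℍ[ℝ] :=
  ⟨0, -(Real.sin α * Real.sin β), Real.cos α * Real.sin β, 0⟩

/-- `∂ι/∂β`. -/
def sphB (α β : ℝ) : ℍ[ℝ] :=
  ⟨0, Real.cos α * Real.cos β, Real.sin α * Real.cos β, -Real.sin β⟩

/-- Complex Extrinsic on ω. -/
def IsCE (f : ℍ[ℝ] → ℍ[ℝ]) (ω : Set ℍ[ℝ]) : Prop := ∀ p ∈ ω, f p * p = p * f p

/-- Class I : C¹, CE and `∂f/∂t + ι ∂f/∂r = 0`. -/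
def IsClassI (f : ℍ[ℝ] → ℍ[ℝ]) (ω : Set ℍ[ℝ]) : Prop :=
  ContDiffOn ℝ 1 f ω ∧ IsCE f ω ∧
  ∀ p ∈ ω, fderiv ℝ f p 1 + iota p * fderiv ℝ f p (iota p) = 0

/-- Class II with an explicit decomposition `f = u + ι v`. -/
def IsClassIIWith (f : ℍ[ℝ] → ℍ[ℝ]) (u v : ℍ[ℝ] → ℝ) (ω : Set ℍ[ℝ]) : Prop :=
  ContDiffOn ℝ 1 f ω ∧
  (∀ p ∈ ω, f p = (u p : ℍ[ℝ]) + (v p : ℍ[ℝ]) * iota p) ∧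
  ∀ p ∈ ω, fueterL f p = ((-2 * v p / ‖p.im‖ : ℝ) : ℍ[ℝ])

/-- (left-) Class II. -/
def IsClassII (f : ℍ[ℝ] → ℍ[ℝ]) (ω : Set ℍ[ℝ]) : Prop := ∃ u v, IsClassIIWith f u v ω

/-- right-Class II with an explicit decomposition. -/
def IsClassIIRWith (f : ℍ[ℝ] → ℍ[ℝ]) (u v : ℍ[ℝ] → ℝ) (ω : Set ℍ[ℝ]) : Prop :=
  ContDiffOn ℝ 1 f ω ∧
  (∀ p ∈ ω, f p = (u p : ℍ[ℝ]) + (v p : ℍ[ℝ]) * iota p) ∧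
  ∀ p ∈ ω, fueterR f p = ((-2 * v p / ‖p.im‖ : ℝ) : ℍ[ℝ])

/-- right-Class II. -/
def IsClassIIR (f : ℍ[ℝ] → ℍ[ℝ]) (ω : Set ℍ[ℝ]) : Prop := ∃ u v, IsClassIIRWith f u v ω

/-- Complex Intrinsic : `u`, `v` depend only on `(t, r)`. -/
def IsCI (f : ℍ[ℝ] → ℍ[ℝ]) (ω : Set ℍ[ℝ]) : Prop :=
  ∃ ut vt : ℝ → ℝ → ℝ, ∀ p ∈ ω,
    f p = (ut p.re ‖p.im‖ : ℍ[ℝ]) + (vt p.re ‖p.im‖ : ℍ[ℝ]) * iota p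

/-- Class III : Class I and CI. -/
def IsClassIII (f : ℍ[ℝ] → ℍ[ℝ]) (ω : Set ℍ[ℝ]) : Prop := IsClassI f ω ∧ IsCI f ω



lemma norm_sq_q (q : ℍ[ℝ]) : ‖q‖^2 = q.re^2 + q.imI^2 + q.imJ^2 + q.imK^2 := by
  rw [sq, ← Quaternion.normSq_eq_norm_mul_self, Quaternion.normSq_def']

lemma im_idem (q : ℍ[ℝ]) : q.im.im = q.im := by ext <;> simp

lemma fderiv_perp (f : ℍ[ℝ] → ℍ[ℝ]) (ω : Set ℍ[ℝ]) (hω : IsOpen ω)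
    (ut vt : ℝ → ℝ → ℝ)
    (hCI : ∀ p ∈ ω, f p = ((ut p.re ‖p.im‖ : ℝ) : ℍ[ℝ]) + ((vt p.re ‖p.im‖ : ℝ) : ℍ[ℝ]) * iota p)
    (p : ℍ[ℝ]) (hp : p ∈ ω) (him : p.im ≠ 0) (hdf : DifferentiableAt ℝ f p)
    (w : ℍ[ℝ]) (hwre : w.re = 0)
    (horth : w.imI * p.imI + w.imJ * p.imJ + w.imK * p.imK = 0)
    (hwn : ‖w‖ = ‖p.im‖) :
    fderiv ℝ f p w = ((vt p.re ‖p.im‖) / ‖p.im‖) • w := by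
  set r := ‖p.im‖ with hrdef
  have hr : 0 < r := norm_pos_iff.2 him
  set γ : ℝ → ℍ[ℝ] := fun s => ((p.re : ℝ) : ℍ[ℝ]) + Real.cos s • p.im + Real.sin s • w with hγdef
  have hγ0 : γ 0 = p := by simp [hγdef]
  have hγre : ∀ s, (γ s).re = p.re := by intro s; simp [hγdef, hwre]
  have hwim : w.im = w := by ext <;> simp [hwre]
  have hγim : ∀ s, (γ s).im = Real.cos s • p.im + Real.sin s • w := by
    intro s; simp [hγdef, im_idem, hwim]
  have hpn : p.imI^2 + p.imJ^2 + p.imK^2 = r^2 := by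
    rw [hrdef, norm_sq_q]; simp
  have hwn2 : w.imI^2 + w.imJ^2 + w.imK^2 = r^2 := by
    have := norm_sq_q w; rw [hwn, hwre] at this; linarith [hpn]
  have hγn : ∀ s, ‖(γ s).im‖ = r := by
    intro s
    have h2 : ‖(γ s).im‖^2 = r^2 := by
      rw [norm_sq_q, hγim]
      have hsc := Real.sin_sq_add_cos_sq s
      simp only [Quaternion.re_add, Quaternion.imI_add, Quaternion.imJ_add, Quaternion.imK_add,
        Quaternion.re_smul, Quaternion.imI_smul, Quaternion.imJ_smul, Quaternion.imK_smul,
        Quaternion.re_im, Quaternion.imI_im, Quaternion.imJ_im, Quaternion.imK_im,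
        smul_eq_mul, hwre]
      linear_combination (Real.cos s)^2 * hpn + (Real.sin s)^2 * hwn2 + 2*Real.cos s*Real.sin s*horth + r^2*hsc
    have h3 : 0 ≤ ‖(γ s).im‖ := norm_nonneg _
    nlinarith
  have hγiota : ∀ s, iota (γ s) = r⁻¹ • (Real.cos s • p.im + Real.sin s • w) := by
    intro s; rw [iota, hγn, hγim]
  have hγcont : Continuous γ := by fun_prop
  have hmem : ∀ᶠ s in nhds (0:ℝ), γ s ∈ ω := by
    have := hγcont.continuousAt (x := (0:ℝ))
    exact this.eventually_mem (hγ0 ▸ hω.mem_nhds hp)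
  set h : ℝ → ℍ[ℝ] := fun s =>
    ((ut p.re r : ℝ) : ℍ[ℝ]) + ((vt p.re r : ℝ) : ℍ[ℝ]) * (r⁻¹ • (Real.cos s • p.im + Real.sin s • w))
    with hhdef
  have heq : (fun s => f (γ s)) =ᶠ[nhds (0:ℝ)] h := by
    filter_upwards [hmem] with s hs
    rw [hCI _ hs, hγre, hγn, hγiota]
  have hd1 : HasDerivAt γ w 0 := by
    have h1 : HasDerivAt (fun s => Real.cos s • p.im) ((-Real.sin 0) • p.im) 0 :=
      (Real.hasDerivAt_cos 0).smul_const p.im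
    have h2 : HasDerivAt (fun s => Real.sin s • w) ((Real.cos 0) • w) 0 :=
      (Real.hasDerivAt_sin 0).smul_const w
    have := (h1.add h2).const_add ((p.re : ℝ) : ℍ[ℝ])
    simpa [hγdef, add_assoc] using this
  have hd2 : HasDerivAt h (((vt p.re r : ℝ) : ℍ[ℝ]) * (r⁻¹ • w)) 0 := by
    have h1 : HasDerivAt (fun s => Real.cos s • p.im) ((-Real.sin 0) • p.im) 0 :=
      (Real.hasDerivAt_cos 0).smul_const p.im
    have h2 : HasDerivAt (fun s => Real.sin s • w) ((Real.cos 0) • w) 0 :=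
      (Real.hasDerivAt_sin 0).smul_const w
    have h3 := ((h1.add h2).const_smul (r⁻¹)).const_mul ((vt p.re r : ℝ) : ℍ[ℝ])
    have h4 := h3.const_add ((ut p.re r : ℝ) : ℍ[ℝ])
    simpa [hhdef] using h4
  have hdg : HasDerivAt (fun s => f (γ s)) (fderiv ℝ f p w) 0 := by
    have := hdf.hasFDerivAt
    rw [show p = γ 0 from hγ0.symm] at this
    have h' := this.comp_hasDerivAt 0 hd1
    rw [hγ0] at h'
    exact h'
  have hdg2 : HasDerivAt (fun s => f (γ s)) (((vt p.re r : ℝ) : ℍ[ℝ]) * (r⁻¹ • w)) 0 :=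
    hd2.congr_of_eventuallyEq heq
  have := hdg.unique hdg2
  rw [this, mul_smul_comm, Quaternion.coe_mul_eq_smul, smul_smul, div_eq_mul_inv, mul_comm]

lemma fderiv_perp' (f : ℍ[ℝ] → ℍ[ℝ]) (ω : Set ℍ[ℝ]) (hω : IsOpen ω)
    (ut vt : ℝ → ℝ → ℝ)
    (hCI : ∀ p ∈ ω, f p = ((ut p.re ‖p.im‖ : ℝ) : ℍ[ℝ]) + ((vt p.re ‖p.im‖ : ℝ) : ℍ[ℝ]) * iota p)
    (p : ℍ[ℝ]) (hp : p ∈ ω) (him : p.im ≠ 0) (hdf : DifferentiableAt ℝ f p)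
    (w : ℍ[ℝ]) (hwre : w.re = 0)
    (horth : w.imI * p.imI + w.imJ * p.imJ + w.imK * p.imK = 0) :
    fderiv ℝ f p w = ((vt p.re ‖p.im‖) / ‖p.im‖) • w := by
  rcases eq_or_ne w 0 with rfl | hw0
  · simp
  · set c := ‖p.im‖ / ‖w‖ with hc
    have hwpos : 0 < ‖w‖ := norm_pos_iff.2 hw0
    have hcpos : 0 < c := div_pos (norm_pos_iff.2 him) hwpos
    have key := fderiv_perp f ω hω ut vt hCI p hp him hdf (c • w)
      (by simp [hwre])
      (by simp only [Quaternion.imI_smul, Quaternion.imJ_smul, Quaternion.imK_smul,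
            smul_eq_mul]; linear_combination c * horth)
      (by rw [norm_smul, Real.norm_eq_abs, abs_of_pos hcpos, hc,
            div_mul_cancel₀ _ hwpos.ne'])
    rw [map_smul, smul_comm] at key
    exact smul_right_injective _ hcpos.ne' key

lemma iota_comp (p : ℍ[ℝ]) :
    (iota p).re = 0 ∧ (iota p).imI = ‖p.im‖⁻¹ * p.imI ∧ (iota p).imJ = ‖p.im‖⁻¹ * p.imJ ∧
      (iota p).imK = ‖p.im‖⁻¹ * p.imK := by
  refine ⟨?_, ?_, ?_, ?_⟩ <;> simp [iota]

/-- Class III ⊆ Class II. -/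
theorem stmt7 (ω : Set ℍ[ℝ]) (hω : IsOpen ω) (hIm : ∀ p ∈ ω, p.im ≠ 0)
    (f : ℍ[ℝ] → ℍ[ℝ]) (hf : IsClassIII f ω) :
    IsClassII f ω := by
  obtain ⟨⟨hC1, hCE, hI⟩, ut, vt, hCI⟩ := hf
  refine ⟨fun q => ut q.re ‖q.im‖, fun q => vt q.re ‖q.im‖, hC1, hCI, ?_⟩
  intro p hp
  have him : p.im ≠ 0 := hIm p hp
  have hr : 0 < ‖p.im‖ := norm_pos_iff.2 him
  have hdf : DifferentiableAt ℝ f p :=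
    (hC1.differentiableOn one_ne_zero).differentiableAt (hω.mem_nhds hp)
  set r := ‖p.im‖ with hrdef
  set v := vt p.re r with hvdef
  set vr := v / r with hvrdef
  set a := iota p with hadef
  obtain ⟨hare, haI, haJ, haK⟩ := iota_comp p
  rw [← hadef] at hare haI haJ haK
  rw [← hrdef] at haI haJ haK
  have hr0 : r ≠ 0 := hr.ne'
  have hpn : p.imI^2 + p.imJ^2 + p.imK^2 = r^2 := by rw [hrdef, norm_sq_q]; simp
  have haa : a * a = -1 := by
    ext
    · rw [Quaternion.re_mul, hare, haI, haJ, haK]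
      have h1 : (-1 : ℍ[ℝ]).re = -1 := by simp
      rw [h1]
      field_simp
      linear_combination (-1) * hpn
    · rw [Quaternion.imI_mul, hare]
      have h1 : (-1 : ℍ[ℝ]).imI = 0 := by simp
      rw [h1]; ring
    · rw [Quaternion.imJ_mul, hare]
      have h1 : (-1 : ℍ[ℝ]).imJ = 0 := by simp
      rw [h1]; ring
    · rw [Quaternion.imK_mul, hare]
      have h1 : (-1 : ℍ[ℝ]).imK = 0 := by simp
      rw [h1]; ring
  have hclassI := hI p hp
  set D1 := fderiv ℝ f p 1 with hD1def
  set Dι := fderiv ℝ f p (iota p) with hDιdef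
  have haD : a * Dι = -D1 := eq_neg_of_add_eq_zero_right hclassI
  have hsum : a.imI • qI + a.imJ • qJ + a.imK • qK = a := by
    ext <;> simp [hare] <;> simp [qI, qJ, qK]
  have hip : a.imI * p.imI + a.imJ * p.imJ + a.imK * p.imK = r := by
    rw [haI, haJ, haK]
    field_simp
    linear_combination hpn
  have hDe : ∀ (e : ℍ[ℝ]) (c : ℝ), e.re = 0 →
      (e.imI * p.imI + e.imJ * p.imJ + e.imK * p.imK = c * r) →
      fderiv ℝ f p e = c • Dι + vr • (e - c • a) := by
    intro e c hre hor
    have hwre : (e - c • a).re = 0 := by simp [hre, hare]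
    have hwor : (e - c • a).imI * p.imI + (e - c • a).imJ * p.imJ +
        (e - c • a).imK * p.imK = 0 := by
      simp only [Quaternion.imI_sub, Quaternion.imJ_sub, Quaternion.imK_sub,
        Quaternion.imI_smul, Quaternion.imJ_smul, Quaternion.imK_smul, smul_eq_mul]
      linear_combination hor - c * hip
    have hperp := fderiv_perp' f ω hω ut vt hCI p hp him hdf (e - c • a) hwre hwor
    calc fderiv ℝ f p e = fderiv ℝ f p (c • a + (e - c • a)) := by rw [add_sub_cancel]
      _ = c • Dι + vr • (e - c • a) := by
          rw [map_add, map_smul, hperp, hadef, ← hrdef, ← hvdef, ← hvrdef, ← hDιdef]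
  have hqIn : (qI.imI * p.imI + qI.imJ * p.imJ + qI.imK * p.imK = a.imI * r) := by
    rw [haI]
    show 1 * p.imI + 0 * p.imJ + 0 * p.imK = r⁻¹ * p.imI * r
    field_simp
    ring
  have hqJn : (qJ.imI * p.imI + qJ.imJ * p.imJ + qJ.imK * p.imK = a.imJ * r) := by
    rw [haJ]
    show 0 * p.imI + 1 * p.imJ + 0 * p.imK = r⁻¹ * p.imJ * r
    field_simp
    ring
  have hqKn : (qK.imI * p.imI + qK.imJ * p.imJ + qK.imK * p.imK = a.imK * r) := by
    rw [haK]
    show 0 * p.imI + 0 * p.imJ + 1 * p.imK = r⁻¹ * p.imK * r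
    field_simp
    ring
  have heI := hDe qI a.imI rfl hqIn
  have heJ := hDe qJ a.imJ rfl hqJn
  have heK := hDe qK a.imK rfl hqKn
  have hqq : qI * qI + qJ * qJ + qK * qK = ((-3 : ℝ) : ℍ[ℝ]) := by
    ext <;> simp <;> simp [qI, qJ, qK] <;> norm_num
  have hmain : qI * (a.imI • Dι + vr • (qI - a.imI • a))
      + qJ * (a.imJ • Dι + vr • (qJ - a.imJ • a))
      + qK * (a.imK • Dι + vr • (qK - a.imK • a))
      = (a.imI • qI + a.imJ • qJ + a.imK • qK) * Dι
        + vr • ((qI * qI + qJ * qJ + qK * qK) - (a.imI • qI + a.imJ • qJ + a.imK • qK) * a) := by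
    simp only [mul_add, mul_sub, smul_sub, smul_add, mul_smul_comm, smul_mul_assoc, add_mul]
    module
  have hcoe : vr • (((-3 : ℝ) : ℍ[ℝ]) - -1) = ((-2 * v / r : ℝ) : ℍ[ℝ]) := by
    have h1 : ((-3 : ℝ) : ℍ[ℝ]) - -1 = ((-2 : ℝ) : ℍ[ℝ]) := by
      ext <;> simp [Quaternion.re_coe, Quaternion.imI_coe, Quaternion.imJ_coe,
        Quaternion.imK_coe]
      norm_num
    rw [h1, Quaternion.smul_coe]
    exact congrArg _ (by rw [hvrdef]; ring)
  have hfin : D1 + (qI * (a.imI • Dι + vr • (qI - a.imI • a))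
      + qJ * (a.imJ • Dι + vr • (qJ - a.imJ • a))
      + qK * (a.imK • Dι + vr • (qK - a.imK • a)))
      = ((-2 * v / r : ℝ) : ℍ[ℝ]) := by
    rw [hmain, hsum, hqq, haD, haa, hcoe]
    abel
  show fueterL f p = _
  rw [fueterL, ← hD1def, heI, heJ, heK, add_assoc, add_assoc,
    ← add_assoc (qI * (a.imI • Dι + vr • (qI - a.imI • a))), hfin]

end
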